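/- The functor Coalg → hCoalg, sending an ordinary coalgebra C in 𝒱 to the homotopy coalgebra with C(J)=C^{⊗J}, C(φ^op)=(⊗_{j∈J}Δ_{φ⁻¹j})·λ^φ, χ^I=λ^ψ, and a coalgebra morphism t to the family (t^{⊗I})_{I∈ℕ}, is full and faithful. -/

import Mathlib

/-!
Statement 1: The functor `Coalg → hCoalg`, sending an ordinary coalgebra `C` to the induced
homotopy coalgebra (`C(J) = C^{⊗J}`, `C(φ^op) = (⊗_j Δ_{φ⁻¹j})·λ^φ`, `χ^I = λ^ψ`) and a
coalgebra morphism `t` to the family `(t^{⊗I})_{I∈ℕ}`, is full and faithful.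
-/


open CategoryTheory Category Limits

universe v u

namespace Paper

/-- The number of elements of the fiber `φ⁻¹(j)` of a monotone map of finite ordinals. -/
def fiberCard {I J : ℕ} (φ : Fin I →o Fin J) (j : Fin J) : ℕ :=
  (Finset.univ.filter fun i => φ i = j).card

/-- The monotone enumeration of the fiber `φ⁻¹(j)`. -/
noncomputable def fiberEmb {I J : ℕ} (φ : Fin I →o Fin J) (j : Fin J)
    (p : Fin (fiberCard φ j)) : Fin I :=
  (((Finset.univ.filter fun i => φ i = j).orderIsoOfFin rfl) p).1

/-- `ψ` is the monotone map `⊔ᵢ nᵢ → I` sending the `i`-th block (of size `nᵢ`) to `i`;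
a monotone map is uniquely determined by its fiber cardinalities. -/
def IsBlockMap {I : ℕ} (n : Fin I → ℕ) (ψ : Fin (∑ i, n i) →o Fin I) : Prop :=
  ∀ i, fiberCard ψ i = n i

/-- The push-forward `φ_* k` of a multi-index: `(φ_* k)_j = ∑_{i ∈ φ⁻¹ j} k_i`. -/
noncomputable def pushf {I J : ℕ} (φ : Fin I →o Fin J) (k : Fin I → ℕ) (j : Fin J) : ℕ :=
  ∑ p, k (fiberEmb φ j p)

variable (V : Type u) [Category.{v} V]

/-- The data of a (strict) colax Monoidal structure on `V`: unbiased tensor products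
`⊗^{i∈I} Xᵢ` of finite families, and structure morphisms
`λ^φ : ⊗^{j∈J} ⊗^{i∈φ⁻¹j} Xᵢ ⟶ ⊗^{i∈I} Xᵢ` for monotone `φ : I → J`. -/
structure ColaxSetting where
  tens : ∀ {n : ℕ}, (Fin n → V) → V
  tensHom : ∀ {n : ℕ} {X Y : Fin n → V}, (∀ i, X i ⟶ Y i) → (tens X ⟶ tens Y)
  tensHom_id : ∀ {n : ℕ} (X : Fin n → V), tensHom (fun i => 𝟙 (X i)) = 𝟙 (tens X)
  tensHom_comp : ∀ {n : ℕ} {X Y Z : Fin n → V} (f : ∀ i, X i ⟶ Y i) (g : ∀ i, Y i ⟶ Z i),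
      tensHom (fun i => f i ≫ g i) = tensHom f ≫ tensHom g
  tens_single : ∀ (X : Fin 1 → V), tens X = X 0
  lam : ∀ {I J : ℕ} (φ : Fin I →o Fin J) (X : Fin I → V),
      tens (fun j => tens (fun p => X (fiberEmb φ j p))) ⟶ tens X
  lam_natural : ∀ {I J : ℕ} (φ : Fin I →o Fin J) {X Y : Fin I → V} (f : ∀ i, X i ⟶ Y i),
      tensHom (fun j => tensHom (fun p => f (fiberEmb φ j p))) ≫ lam φ Y
        = lam φ X ≫ tensHom f

variable {V}

/-- Tensor powers `X^{⊗n}`. -/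
def ColaxSetting.pow (S : ColaxSetting V) (X : V) (n : ℕ) : V := S.tens (fun _ : Fin n => X)

theorem ColaxSetting.pow_eq (S : ColaxSetting V) (X : V) {c d : ℕ} (h : c = d) :
    S.pow X c = S.pow X d := by subst h; rfl

/-- When all structure morphisms `λ^φ` are invertible, `(V, ⊗, λ)` is Monoidal
(rather than merely colax Monoidal). -/
structure ColaxSetting.Monoidal (S : ColaxSetting V) where
  lamInv : ∀ {I J : ℕ} (φ : Fin I →o Fin J) (X : Fin I → V),
      S.tens X ⟶ S.tens (fun j => S.tens (fun p => X (fiberEmb φ j p)))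
  lam_lamInv : ∀ {I J : ℕ} (φ : Fin I →o Fin J) (X : Fin I → V),
      S.lam φ X ≫ lamInv φ X = 𝟙 _
  lamInv_lam : ∀ {I J : ℕ} (φ : Fin I →o Fin J) (X : Fin I → V),
      lamInv φ X ≫ S.lam φ X = 𝟙 _

/-- A homotopy coalgebra (= homotopy comonoid) in `V`: a lax Monoidal functor
`(O_sk^op, ⊔, id) → (V, ⊗, λ)`, unbiasedly unpacked. -/
structure HCoalgebra (S : ColaxSetting V) where
  obj : ℕ → V
  /-- the action of `C` on `φ^op` for a monotone map `φ : I → J` -/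
  map : ∀ {I J : ℕ}, (Fin I →o Fin J) → (obj J ⟶ obj I)
  map_id : ∀ I : ℕ, map (OrderHom.id (α := Fin I)) = 𝟙 (obj I)
  map_comp : ∀ {I J K : ℕ} (φ : Fin I →o Fin J) (ψ : Fin J →o Fin K),
      map (ψ.comp φ) = map ψ ≫ map φ
  /-- the lax Monoidal structure `χ^I_{N₁,…,N_I}` -/
  chi : ∀ {I : ℕ} (N : Fin I → ℕ), S.tens (fun i => obj (N i)) ⟶ obj (∑ i, N i)
  chi_one : ∀ (N : Fin 1 → ℕ) (h : S.tens (fun i => obj (N i)) = obj (∑ i, N i)),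
      chi N = eqToHom h
  /-- naturality of `χ^I` in its arguments; `Φ = ⊔ᵢ φᵢ` is the block sum of the `φᵢ`,
  characterized by preserving blocks and acting as `φᵢ` on the `i`-th block. -/
  chi_natural : ∀ {I : ℕ} {M N : Fin I → ℕ} (φ : ∀ i, Fin (M i) →o Fin (N i))
      (Φ : Fin (∑ i, M i) →o Fin (∑ i, N i))
      (ψM : Fin (∑ i, M i) →o Fin I) (hM : IsBlockMap M ψM)
      (ψN : Fin (∑ i, N i) →o Fin I) (hN : IsBlockMap N ψN)
      (_ : ∀ q, ψN (Φ q) = ψM q)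
      (_ : ∀ (i : Fin I) (p : Fin (fiberCard ψM i)),
        Φ (fiberEmb ψM i p) = fiberEmb ψN i (Fin.cast (hN i).symm (φ i (Fin.cast (hM i) p)))),
      S.tensHom (fun i => map (φ i)) ≫ chi M = chi N ≫ map Φ
  /-- compatibility of `χ` with the colax structure of `V` (diagram (2φ-1φ)). -/
  chi_assoc : ∀ {I J : ℕ} (φ : Fin I →o Fin J) (N : Fin I → ℕ)
      (h : obj (∑ j, ∑ p, N (fiberEmb φ j p)) = obj (∑ i, N i)),
      S.tensHom (fun j => chi (fun p => N (fiberEmb φ j p)))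
          ≫ chi (fun j => ∑ p, N (fiberEmb φ j p)) ≫ eqToHom h
        = S.lam φ (fun i => obj (N i)) ≫ chi N

/-- Morphisms of homotopy coalgebras: Monoidal transformations of lax Monoidal functors. -/
@[ext]
structure HCoalgHom {S : ColaxSetting V} (C G : HCoalgebra S) where
  app : ∀ n : ℕ, C.obj n ⟶ G.obj n
  naturality : ∀ {I J : ℕ} (φ : Fin I →o Fin J),
      app J ≫ G.map φ = C.map φ ≫ app I
  monoidality : ∀ {I : ℕ} (N : Fin I → ℕ),
      S.tensHom (fun i => app (N i)) ≫ G.chi N = C.chi N ≫ app (∑ i, N i)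

/-- The category `hCoalg` of homotopy coalgebras. -/
instance hCoalgCategory (S : ColaxSetting V) : Category (HCoalgebra S) where
  Hom := HCoalgHom
  id C := { app := fun n => 𝟙 _
            naturality := by intros; simp
            monoidality := by intros; rw [S.tensHom_id]; simp }
  comp {C G H} f g :=
    { app := fun n => f.app n ≫ g.app n
      naturality := by
        intro I J φ
        rw [assoc, g.naturality, ← assoc, f.naturality, assoc]
      monoidality := by
        intro I N
        rw [S.tensHom_comp, assoc, g.monoidality, ← assoc, f.monoidality, assoc] }
  id_comp f := by apply HCoalgHom.ext; funext n; simp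
  comp_id f := by apply HCoalgHom.ext; funext n; simp
  assoc f g h := by apply HCoalgHom.ext; funext n; simp

@[simp] theorem hc_id_app {S : ColaxSetting V} (C : HCoalgebra S) (n : ℕ) :
    HCoalgHom.app (𝟙 C) n = 𝟙 (C.obj n) := rfl

@[simp] theorem hc_comp_app {S : ColaxSetting V} {C G H : HCoalgebra S}
    (f : C ⟶ G) (g : G ⟶ H) (n : ℕ) :
    HCoalgHom.app (f ≫ g) n = HCoalgHom.app f n ≫ HCoalgHom.app g n := rfl

/-- An ordinary coalgebra in `V`: an object with compatible comultiplications `Δ_I`. -/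
structure OrdCoalgebra (S : ColaxSetting V) where
  pt : V
  delta : ∀ I : ℕ, pt ⟶ S.tens (fun _ : Fin I => pt)
  delta_one : ∀ h : pt = S.tens (fun _ : Fin 1 => pt), delta 1 = eqToHom h
  delta_comp : ∀ {I J : ℕ} (φ : Fin I →o Fin J),
      delta I = delta J ≫ S.tensHom (fun j => delta (fiberCard φ j)) ≫ S.lam φ (fun _ => pt)

/-- Morphisms of ordinary coalgebras. -/
structure OrdCoalgHom {S : ColaxSetting V} (C D : OrdCoalgebra S) where
  f : C.pt ⟶ D.pt
  compat : ∀ I : ℕ, f ≫ D.delta I = C.delta I ≫ S.tensHom (fun _ => f)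

/-- `CH` is the homotopy coalgebra induced by the ordinary coalgebra `C`
(Proposition 2.27: `C(J) = C^{⊗J}`, `C(φ^op) = (⊗_j Δ_{φ⁻¹j})·λ^φ`, `χ^I = λ^ψ`). -/
structure Induced {S : ColaxSetting V} (C : OrdCoalgebra S) (CH : HCoalgebra S) where
  hobj : ∀ I : ℕ, CH.obj I = S.tens (fun _ : Fin I => C.pt)
  obj1 : CH.obj 1 = C.pt
  map_eq : ∀ {I J : ℕ} (φ : Fin I →o Fin J),
      CH.map φ = eqToHom (hobj J) ≫ S.tensHom (fun j => C.delta (fiberCard φ j))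
        ≫ S.lam φ (fun _ => C.pt) ≫ eqToHom (hobj I).symm
  chi_eq : ∀ {I : ℕ} (N : Fin I → ℕ) (ψ : Fin (∑ i, N i) →o Fin I) (_ : IsBlockMap N ψ)
      (h1 : S.tens (fun i => CH.obj (N i))
          = S.tens (fun i => S.tens (fun _ : Fin (fiberCard ψ i) => C.pt))),
      CH.chi N = eqToHom h1 ≫ S.lam ψ (fun _ => C.pt) ≫ eqToHom (hobj (∑ i, N i)).symm


/-! ### Auxiliary lemmas -/

section Aux

open Finset

/-- A downward-closed filtered subset of `range I` is an initial segment. -/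
lemma filter_range_eq_range {P : ℕ → Prop} [DecidablePred P] {I : ℕ}
    (hdc : ∀ {a b : ℕ}, a ≤ b → P b → P a) :
    (Finset.range I).filter P = Finset.range (((Finset.range I).filter P).card) := by
  set F := (Finset.range I).filter P with hF
  have hsub : F ⊆ Finset.range F.card := by
    intro x hx
    simp only [Finset.mem_range]
    have : Finset.range (x+1) ⊆ F := by
      intro y hy
      simp only [Finset.mem_range] at hy
      have hx' := hx
      simp only [hF, Finset.mem_filter, Finset.mem_range] at hx' ⊢
      exact ⟨lt_of_le_of_lt (by omega) hx'.1, hdc (by omega) hx'.2⟩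
    have := Finset.card_le_card this
    simpa using this
  have hsub2 : Finset.range F.card ⊆ F := by
    intro j hj
    simp only [Finset.mem_range] at hj
    by_contra hjF
    have : F ⊆ Finset.range j := by
      intro x hx
      simp only [Finset.mem_range]
      by_contra hxj
      push_neg at hxj
      apply hjF
      have hx' := hx
      simp only [hF, Finset.mem_filter, Finset.mem_range] at hx' ⊢
      exact ⟨lt_of_le_of_lt hxj hx'.1, hdc hxj hx'.2⟩
    have := Finset.card_le_card this
    simp at this; omega
  exact Finset.Subset.antisymm hsub hsub2

variable {I : ℕ} (N : Fin I → ℕ)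

/-- The extension of `N` by zero to all of `ℕ`. -/
def Next (k : ℕ) : ℕ := if h : k < I then N ⟨k, h⟩ else 0

/-- Partial sums of `N`. -/
def Tsum (m : ℕ) : ℕ := ∑ k ∈ Finset.range m, Next N k

lemma Tsum_mono : Monotone (Tsum N) := by
  intro a b hab
  exact Finset.sum_le_sum_of_subset (Finset.range_subset_range.2 hab)

lemma Tsum_top : Tsum N I = ∑ i, N i := by
  rw [Tsum, ← Fin.sum_univ_eq_sum_range]
  apply Finset.sum_congr rfl
  intro i _
  simp [Next, i.2]

/-- The block index of `q`: the number of blocks entirely below `q`. -/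
def cfun (q : ℕ) : ℕ := ((Finset.range I).filter (fun j => Tsum N (j+1) ≤ q)).card

lemma cfun_mem_iff (q j : ℕ) : j < cfun N q ↔ (j < I ∧ Tsum N (j+1) ≤ q) := by
  have h := filter_range_eq_range (P := fun j => Tsum N (j+1) ≤ q) (I := I)
    (fun {a b} hab hb => le_trans (Tsum_mono N (by omega)) hb)
  constructor
  · intro hj
    have : j ∈ (Finset.range I).filter (fun j => Tsum N (j+1) ≤ q) := by
      rw [h]; simpa [cfun] using hj
    simpa using this
  · intro ⟨h1, h2⟩
    have : j ∈ (Finset.range I).filter (fun j => Tsum N (j+1) ≤ q) := by simp [h1, h2]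
    rw [h] at this
    simpa [cfun] using this

lemma cfun_lt (q : ℕ) (hq : q < ∑ i, N i) : cfun N q < I := by
  rcases Nat.lt_or_ge (cfun N q) I with h | h
  · exact h
  · exfalso
    have hI : 0 < I := by
      rcases Nat.eq_zero_or_pos I with h0 | h0
      · subst h0; simp at hq
      · exact h0
    have : I - 1 < cfun N q := by omega
    rw [cfun_mem_iff] at this
    have : Tsum N I ≤ q := by
      have := this.2
      have hI1 : I - 1 + 1 = I := by omega
      rwa [hI1] at this
    rw [Tsum_top] at this; omega

/-- The canonical block map `⊔ᵢ nᵢ → I` for an arbitrary multi-index `N`. -/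
noncomputable def blockMap : Fin (∑ i, N i) →o Fin I where
  toFun q := ⟨cfun N q.1, cfun_lt N q.1 q.2⟩
  monotone' := by
    intro a b hab
    have : cfun N a.1 ≤ cfun N b.1 := by
      apply Finset.card_le_card
      intro x hx
      simp only [Finset.mem_filter, Finset.mem_range] at hx ⊢
      exact ⟨hx.1, le_trans hx.2 hab⟩
    exact this

lemma cfun_eq_iff (q : ℕ) (hq : q < ∑ i, N i) (i : ℕ) (hi : i < I) :
    cfun N q = i ↔ (Tsum N i ≤ q ∧ q < Tsum N (i+1)) := by
  constructor
  · intro h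
    constructor
    · rcases Nat.eq_zero_or_pos i with h0 | h0
      · subst h0; simp [Tsum]
      · have : i - 1 < cfun N q := by omega
        rw [cfun_mem_iff] at this
        have := this.2
        have : Tsum N i ≤ q := by
          have h1 : i - 1 + 1 = i := by omega
          rwa [h1] at this
        exact this
    · by_contra hcon
      push_neg at hcon
      have : i < cfun N q := (cfun_mem_iff N q i).2 ⟨hi, hcon⟩
      omega
  · intro ⟨h1, h2⟩
    have hle : cfun N q ≤ i := by
      by_contra hcon
      push_neg at hcon
      have := (cfun_mem_iff N q i).1 hcon
      omega
    have hge : i ≤ cfun N q := by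
      rcases Nat.eq_zero_or_pos i with h0 | h0
      · omega
      · have : i - 1 < cfun N q := by
          rw [cfun_mem_iff]
          refine ⟨by omega, ?_⟩
          have hx : i - 1 + 1 = i := by omega
          rw [hx]; exact h1
        omega
    omega

lemma isBlockMap_blockMap : IsBlockMap N (blockMap N) := by
  intro i
  rw [fiberCard]
  have key : ∀ q : Fin (∑ j, N j),
      (blockMap N q = i ↔ (Tsum N i.1 ≤ q.1 ∧ q.1 < Tsum N (i.1+1))) := by
    intro q
    rw [Fin.ext_iff]
    exact cfun_eq_iff N q.1 q.2 i.1 i.2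
  have hT1 : Tsum N (i.1+1) ≤ ∑ j, N j := by
    rw [← Tsum_top N]; exact Tsum_mono N i.2
  calc (Finset.univ.filter fun q => blockMap N q = i).card
      = (Finset.univ.filter fun q : Fin (∑ j, N j) =>
          Tsum N i.1 ≤ q.1 ∧ q.1 < Tsum N (i.1+1)).card := by
        congr 1
        apply Finset.filter_congr
        intro q _
        simpa using key q
    _ = ((Finset.range (∑ j, N j)).filter fun x =>
          Tsum N i.1 ≤ x ∧ x < Tsum N (i.1+1)).card := by
        rw [Finset.card_filter, Finset.card_filter]
        exact Fin.sum_univ_eq_sum_range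
          (fun x => if Tsum N i.1 ≤ x ∧ x < Tsum N (i.1+1) then 1 else 0) _
    _ = (Finset.Ico (Tsum N i.1) (Tsum N (i.1+1))).card := by
        congr 1
        ext x
        simp only [Finset.mem_filter, Finset.mem_range, Finset.mem_Ico]
        omega
    _ = Tsum N (i.1+1) - Tsum N i.1 := Nat.card_Ico _ _
    _ = N i := by
        rw [Tsum, Finset.sum_range_succ, ← Tsum]
        simp [Next, i.2]

/-- The block map for the constant multi-index `1`: the order isomorphism
`Fin (∑ 1) →o Fin I` given by casting. -/
def oneBlockMap (I : ℕ) : Fin (∑ _i : Fin I, 1) →o Fin I where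
  toFun := Fin.cast (by simp)
  monotone' := fun _ _ h => h

/-- The inverse of `oneBlockMap`. -/
def oneBlockInv (I : ℕ) : Fin I →o Fin (∑ _i : Fin I, 1) where
  toFun := Fin.cast (by simp)
  monotone' := fun _ _ h => h

lemma oneBlockMap_comp_inv (I : ℕ) :
    (oneBlockMap I).comp (oneBlockInv I) = OrderHom.id := by
  ext x; simp [oneBlockMap, oneBlockInv]; rfl

lemma oneBlockInv_comp_map (I : ℕ) :
    (oneBlockInv I).comp (oneBlockMap I) = OrderHom.id := by
  ext x; simp [oneBlockMap, oneBlockInv]; rfl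

lemma isBlockMap_one (I : ℕ) : IsBlockMap (fun _ : Fin I => 1) (oneBlockMap I) := by
  intro i
  rw [fiberCard]
  have hi : i.1 < ∑ _i : Fin I, 1 := by simpa using i.2
  have : (Finset.univ.filter fun q : Fin (∑ _i : Fin I, 1) => oneBlockMap I q = i)
      = {(⟨i.1, hi⟩ : Fin (∑ _i : Fin I, 1))} := by
    ext q
    simp [oneBlockMap, Fin.ext_iff]; rfl
  rw [this]
  simp

end Aux

section CatAux

variable {V : Type u} [Category.{v} V]

lemma tensHom_eqToHom (S : ColaxSetting V) {n : ℕ} {A B : Fin n → V} (h : ∀ i, A i = B i) :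
    S.tensHom (fun i => eqToHom (h i)) = eqToHom (congrArg S.tens (funext h)) := by
  have hAB : A = B := funext h
  subst hAB
  have : (fun i => eqToHom (h i)) = fun i => 𝟙 (A i) := by
    funext i; simp
  rw [this, S.tensHom_id]
  simp

lemma tensHom_conj (S : ColaxSetting V) {n : ℕ} {A B A' B' : Fin n → V}
    (hA : ∀ i, A' i = A i) (hB : ∀ i, B i = B' i) (f : ∀ i, A i ⟶ B i) :
    S.tensHom (fun i => eqToHom (hA i) ≫ f i ≫ eqToHom (hB i))
      = eqToHom (congrArg S.tens (funext hA)) ≫ S.tensHom f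
          ≫ eqToHom (congrArg S.tens (funext hB)) := by
  rw [S.tensHom_comp (fun i => eqToHom (hA i)) (fun i => f i ≫ eqToHom (hB i)),
    S.tensHom_comp (fun i => f i) (fun i => eqToHom (hB i)),
    tensHom_eqToHom S hA, tensHom_eqToHom S hB]

lemma tensHom_const_cast (S : ColaxSetting V) {c d : ℕ} (h : c = d) {A B : V} (f : A ⟶ B) :
    S.tensHom (fun _ : Fin c => f)
      = eqToHom (S.pow_eq A h) ≫ S.tensHom (fun _ : Fin d => f)
          ≫ eqToHom (S.pow_eq B h.symm) := by
  subst h; simp; exact (Category.comp_id _).symm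

lemma delta_eq_of_one {S : ColaxSetting V} (C : OrdCoalgebra S) {n : ℕ} (h : n = 1)
    (h2 : C.pt = S.tens (fun _ : Fin n => C.pt)) :
    C.delta n = eqToHom h2 := by
  subst h; exact C.delta_one h2

/-- For the induced homotopy coalgebra, the action of the unique map `φ : I → 1`
is `Δ_I` up to canonical identifications. -/
lemma induced_map_to_one {S : ColaxSetting V} {C : OrdCoalgebra S} {CH : HCoalgebra S}
    (iC : Induced C CH) {I : ℕ} (φ : Fin I →o Fin 1) :
    CH.map φ = eqToHom iC.obj1 ≫ C.delta I ≫ eqToHom (iC.hobj I).symm := by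
  have h : C.pt = S.tens (fun _ : Fin 1 => C.pt) :=
    (S.tens_single (fun _ : Fin 1 => C.pt)).symm
  have hd := C.delta_comp φ
  rw [C.delta_one h] at hd
  rw [iC.map_eq φ, hd]
  simp [eqToHom_trans_assoc]

/-- For the induced homotopy coalgebra, `χ` at the constant multi-index `1` is the
action of the block map `oneBlockMap I` up to canonical identifications. -/
lemma induced_chi_one {S : ColaxSetting V} {C : OrdCoalgebra S} {CH : HCoalgebra S}
    (iC : Induced C CH) (I : ℕ)
    (hE : S.tens (fun i : Fin I => CH.obj 1) = CH.obj I) :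
    CH.chi (fun _ : Fin I => 1) = eqToHom hE ≫ CH.map (oneBlockMap I) := by
  have hbm := isBlockMap_one I
  have hone : ∀ j : Fin I, C.pt = S.tens (fun _ : Fin (fiberCard (oneBlockMap I) j) => C.pt) :=
    fun j => (show C.pt = S.tens (fun _ : Fin 1 => C.pt) from (S.tens_single (fun _ : Fin 1 => C.pt)).symm).trans
      (S.pow_eq C.pt (hbm j).symm)
  have h1 : S.tens (fun i : Fin I => CH.obj ((fun _ : Fin I => 1) i))
      = S.tens (fun i => S.tens (fun _ : Fin (fiberCard (oneBlockMap I) i) => C.pt)) :=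
    congrArg S.tens (funext fun i => (iC.obj1).trans (hone i))
  rw [iC.chi_eq (fun _ : Fin I => 1) (oneBlockMap I) hbm h1, iC.map_eq (oneBlockMap I)]
  have hdel : (fun j : Fin I => C.delta (fiberCard (oneBlockMap I) j))
      = fun j => eqToHom (hone j) := by
    funext j
    exact delta_eq_of_one C (hbm j) (hone j)
  rw [hdel, tensHom_eqToHom S hone]
  simp [eqToHom_trans_assoc]

end CatAux


section MoreAux

variable {V : Type u} [Category.{v} V]

lemma lam_natural_const (S : ColaxSetting V) {A B : V} (f : A ⟶ B) {I J : ℕ}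
    (φ : Fin I →o Fin J) {Z : V} (g : S.tens (fun _ : Fin I => B) ⟶ Z) :
    S.tensHom (fun j : Fin J => S.tensHom (fun _ : Fin (fiberCard φ j) => f))
        ≫ S.lam φ (fun _ : Fin I => B) ≫ g
      = S.lam φ (fun _ : Fin I => A) ≫ S.tensHom (fun _ : Fin I => f) ≫ g := by
  have hn : S.tensHom (fun j : Fin J => S.tensHom (fun _ : Fin (fiberCard φ j) => f))
      ≫ S.lam φ (fun _ : Fin I => B)
      = S.lam φ (fun _ : Fin I => A) ≫ S.tensHom (fun _ : Fin I => f) :=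
    S.lam_natural φ (X := fun _ : Fin I => A) (Y := fun _ : Fin I => B) (fun _ => f)
  rw [← Category.assoc, hn, Category.assoc]

lemma coalgHom_nat_core {S : ColaxSetting V} {C D : OrdCoalgebra S} (t : OrdCoalgHom C D)
    {I J : ℕ} (φ : Fin I →o Fin J) {Z : V} (g : S.tens (fun _ : Fin I => D.pt) ⟶ Z) :
    S.tensHom (fun _ : Fin J => t.f) ≫ S.tensHom (fun j => D.delta (fiberCard φ j))
        ≫ S.lam φ (fun _ => D.pt) ≫ g
      = S.tensHom (fun j => C.delta (fiberCard φ j)) ≫ S.lam φ (fun _ => C.pt)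
        ≫ S.tensHom (fun _ : Fin I => t.f) ≫ g := by
  rw [← Category.assoc, ← S.tensHom_comp]
  have hcompat : (fun j : Fin J => t.f ≫ D.delta (fiberCard φ j))
      = fun j => C.delta (fiberCard φ j) ≫ S.tensHom (fun _ : Fin (fiberCard φ j) => t.f) :=
    funext fun j => t.compat _
  rw [hcompat, S.tensHom_comp, Category.assoc, lam_natural_const S t.f φ g]

lemma map_oneBlock_isIso {S : ColaxSetting V} (CH : HCoalgebra S) (I : ℕ) :
    IsIso (CH.map (oneBlockMap I)) :=
  ⟨CH.map (oneBlockInv I),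
    by rw [← CH.map_comp, oneBlockMap_comp_inv, CH.map_id],
    by rw [← CH.map_comp, oneBlockInv_comp_map, CH.map_id]⟩

end MoreAux

theorem statement_1 {V : Type u} [Category.{v} V] {S : ColaxSetting V}
    (C D : OrdCoalgebra S) (CH DH : HCoalgebra S)
    (iC : Induced C CH) (iD : Induced D DH) :
    -- the assignment `t ↦ (t^{⊗I})_I` is well defined: it lands in `hCoalg(CH, DH)` …
    (∀ t : OrdCoalgHom C D, ∃ u : HCoalgHom CH DH, ∀ I : ℕ,
      u.app I = eqToHom (iC.hobj I) ≫ S.tensHom (fun _ : Fin I => t.f)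
        ≫ eqToHom (iD.hobj I).symm) ∧
    -- … it is injective on morphisms (the functor is faithful) …
    (∀ t t' : OrdCoalgHom C D,
      (∀ I : ℕ,
        (eqToHom (iC.hobj I) ≫ S.tensHom (fun _ : Fin I => t.f) ≫ eqToHom (iD.hobj I).symm :
            CH.obj I ⟶ DH.obj I)
          = eqToHom (iC.hobj I) ≫ S.tensHom (fun _ : Fin I => t'.f) ≫ eqToHom (iD.hobj I).symm)
      → t.f = t'.f) ∧
    -- … and surjective on morphisms (the functor is full).
    (∀ u : HCoalgHom CH DH, ∃ t : OrdCoalgHom C D, ∀ I : ℕ,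
      u.app I = eqToHom (iC.hobj I) ≫ S.tensHom (fun _ : Fin I => t.f)
        ≫ eqToHom (iD.hobj I).symm) := by
  have hCp : C.pt = S.tens (fun _ : Fin 1 => C.pt) :=
    (S.tens_single (fun _ : Fin 1 => C.pt)).symm
  have hDp : D.pt = S.tens (fun _ : Fin 1 => D.pt) :=
    (S.tens_single (fun _ : Fin 1 => D.pt)).symm
  have hsing : ∀ t : OrdCoalgHom C D,
      S.tensHom (fun _ : Fin 1 => t.f) = eqToHom hCp.symm ≫ t.f ≫ eqToHom hDp := by
    intro t
    have h := (t.compat 1).symm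
    rw [C.delta_one hCp, D.delta_one hDp] at h
    rw [eqToHom_comp_iff] at h
    rw [h]
  refine ⟨?_, ?_, ?_⟩
  · -- well-definedness
    intro t
    refine ⟨⟨fun I => eqToHom (iC.hobj I) ≫ S.tensHom (fun _ : Fin I => t.f)
        ≫ eqToHom (iD.hobj I).symm, ?_, ?_⟩, fun I => rfl⟩
    · -- naturality
      intro I J φ
      rw [iC.map_eq φ, iD.map_eq φ]
      simp only [Category.assoc, eqToHom_trans_assoc, eqToHom_refl, Category.id_comp]
      rw [coalgHom_nat_core t φ]
    · -- monoidality
      intro I N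
      have hbm : ∀ i, fiberCard (blockMap N) i = N i := isBlockMap_blockMap N
      have hAC : ∀ i, CH.obj (N i)
          = S.tens (fun _ : Fin (fiberCard (blockMap N) i) => C.pt) :=
        fun i => (iC.hobj (N i)).trans (S.pow_eq C.pt (hbm i).symm)
      have hAD : ∀ i, DH.obj (N i)
          = S.tens (fun _ : Fin (fiberCard (blockMap N) i) => D.pt) :=
        fun i => (iD.hobj (N i)).trans (S.pow_eq D.pt (hbm i).symm)
      rw [iC.chi_eq N (blockMap N) hbm (congrArg S.tens (funext hAC)),
          iD.chi_eq N (blockMap N) hbm (congrArg S.tens (funext hAD))]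
      have happ : (fun i => eqToHom (iC.hobj (N i)) ≫ S.tensHom (fun _ : Fin (N i) => t.f)
            ≫ eqToHom (iD.hobj (N i)).symm)
          = fun i => eqToHom (hAC i)
              ≫ S.tensHom (fun _ : Fin (fiberCard (blockMap N) i) => t.f)
              ≫ eqToHom (hAD i).symm := by
        funext i
        rw [tensHom_const_cast S (hbm i).symm t.f]
        unfold ColaxSetting.pow
        simp only [Category.assoc, eqToHom_trans_assoc, eqToHom_trans, eqToHom_refl,
          Category.id_comp, Category.comp_id]
        refine (eqToHom_trans_assoc _ _ _).trans ?_
        exact congrArg (CategoryStruct.comp _) (congrArg (CategoryStruct.comp _) (eqToHom_trans _ _))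
      rw [happ, tensHom_conj S hAC (fun i => (hAD i).symm)
        (fun i => S.tensHom (fun _ : Fin (fiberCard (blockMap N) i) => t.f))]
      simp only [Category.assoc, eqToHom_trans_assoc, eqToHom_refl, Category.id_comp]
      rw [lam_natural_const S t.f (blockMap N)]
  · -- faithfulness
    intro t t' hyp
    have h1 := hyp 1
    have h2 : S.tensHom (fun _ : Fin 1 => t.f) = S.tensHom (fun _ : Fin 1 => t'.f) := by
      have := congrArg (fun z => eqToHom (iC.hobj 1).symm ≫ z ≫ eqToHom (iD.hobj 1)) h1
      simpa [eqToHom_trans_assoc, Category.assoc] using this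
    rw [hsing t, hsing t'] at h2
    have := congrArg (fun z => eqToHom hCp ≫ z ≫ eqToHom hDp.symm) h2
    simpa using this
  · -- fullness
    intro u
    have happ : ∀ I : ℕ, u.app I = eqToHom (iC.hobj I)
        ≫ S.tensHom (fun _ : Fin I => eqToHom iC.obj1.symm ≫ u.app 1 ≫ eqToHom iD.obj1)
        ≫ eqToHom (iD.hobj I).symm := by
      intro I
      have hEC : S.tens (fun _ : Fin I => CH.obj 1) = CH.obj I :=
        (congrArg S.tens (funext fun _ => iC.obj1)).trans (iC.hobj I).symm
      have hED : S.tens (fun _ : Fin I => DH.obj 1) = DH.obj I :=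
        (congrArg S.tens (funext fun _ => iD.obj1)).trans (iD.hobj I).symm
      have hmono := u.monoidality (fun _ : Fin I => 1)
      rw [induced_chi_one iC I hEC, induced_chi_one iD I hED] at hmono
      rw [Category.assoc, ← u.naturality (oneBlockMap I),
        ← Category.assoc, ← Category.assoc (eqToHom hEC)] at hmono
      have := map_oneBlock_isIso DH I
      have hc := (cancel_mono (DH.map (oneBlockMap I))).1 hmono
      -- hc : tensHom (fun i => u.app 1) ≫ eqToHom hED = eqToHom hEC ≫ u.app I
      have hu : u.app I = eqToHom hEC.symm ≫ S.tensHom (fun _ : Fin I => u.app 1)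
          ≫ eqToHom hED := by
        rw [hc]
        simp
      rw [hu]
      have h2 : (fun _ : Fin I => u.app 1)
          = fun _ : Fin I => eqToHom iC.obj1
              ≫ (eqToHom iC.obj1.symm ≫ u.app 1 ≫ eqToHom iD.obj1)
              ≫ eqToHom iD.obj1.symm := by
        funext _; simp
      rw [h2, tensHom_conj S (fun _ : Fin I => iC.obj1) (fun _ : Fin I => iD.obj1.symm)
        (fun _ => eqToHom iC.obj1.symm ≫ u.app 1 ≫ eqToHom iD.obj1)]
      simp only [← Category.assoc, eqToHom_trans]
      simp only [Category.assoc, eqToHom_trans]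
    refine ⟨⟨eqToHom iC.obj1.symm ≫ u.app 1 ≫ eqToHom iD.obj1, ?_⟩, happ⟩
    intro I
    have φI : Fin I →o Fin 1 := ⟨fun _ => 0, monotone_const⟩
    have hnat := u.naturality φI
    rw [induced_map_to_one iC φI, induced_map_to_one iD φI, happ I] at hnat
    simp only [Category.assoc, eqToHom_trans_assoc, eqToHom_refl, Category.id_comp] at hnat
    have := congrArg (fun z => eqToHom iC.obj1.symm ≫ z ≫ eqToHom (iD.hobj I)) hnat
    simpa [Category.assoc, eqToHom_trans_assoc] using this
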